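/- Let H be a hypergraph on {1,…,s} with nonempty edge set E consisting of distinct edges, and let H* be its edge-removed hypergraph. Then the edge codes C_H and C_{H*} have the same length, the same dimension, and the same minimum distance. -/

import Mathlib

open MvPolynomial

/-- The affine torus `T = (K*)^s`: points of `K^s` with all coordinates nonzero. -/
abbrev Torus (s : ℕ) (K : Type) [Zero K] := {P : Fin s → K // ∀ i, P i ≠ 0}

/-- The evaluation map `f ↦ (f(P))_{P ∈ T}` as a linear map. -/
noncomputable def evalTorus (s : ℕ) (K : Type) [Field K] :
    MvPolynomial (Fin s) K →ₗ[K] (Torus s K → K) :=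
  LinearMap.pi fun P => (aeval (P.1 : Fin s → K)).toLinearMap

/-- The edge code of a hypergraph with edge set `E` on vertex set `{1,…,s}`:
the image under evaluation of the span of the squarefree monomials `∏_{j ∈ e} t_j`. -/
noncomputable def edgeCode (s : ℕ) (K : Type) [Field K] (E : Set (Finset (Fin s))) :
    Submodule K (Torus s K → K) :=
  (Submodule.span K ((fun e : Finset (Fin s) => ∏ j ∈ e, X j) '' E)).map (evalTorus s K)

/-- Hamming weight of a word indexed by the torus. -/
noncomputable def wt {s : ℕ} {K : Type} [Field K] (c : Torus s K → K) : ℕ :=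
  {P | c P ≠ 0}.ncard

/-- Minimum distance of a linear code: the least Hamming weight of a nonzero codeword. -/
noncomputable def minDist {s : ℕ} {K : Type} [Field K] (C : Submodule K (Torus s K → K)) : ℕ :=
  sInf {w : ℕ | ∃ c ∈ C, c ≠ 0 ∧ wt c = w}

def torusInv (s : ℕ) (K : Type) [Field K] : Torus s K ≃ Torus s K where
  toFun P := ⟨fun i => (P.1 i)⁻¹, fun i => inv_ne_zero (P.2 i)⟩
  invFun P := ⟨fun i => (P.1 i)⁻¹, fun i => inv_ne_zero (P.2 i)⟩
  left_inv P := Subtype.ext (funext fun i => inv_inv _)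
  right_inv P := Subtype.ext (funext fun i => inv_inv _)

lemma torusProd_ne_zero {s : ℕ} {K : Type} [Field K] (P : Torus s K) :
    (∏ i, P.1 i) ≠ 0 :=
  Finset.prod_ne_zero_iff.2 fun i _ => P.2 i

noncomputable def phiEquiv (s : ℕ) (K : Type) [Field K] :
    (Torus s K → K) ≃ₗ[K] (Torus s K → K) where
  toFun c P := (∏ i, P.1 i) * c (torusInv s K P)
  invFun c P := (∏ i, P.1 i) * c (torusInv s K P)
  map_add' c d := funext fun P => by simp [mul_add]
  map_smul' a c := funext fun P => by simp [mul_comm, mul_left_comm]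
  left_inv c := funext fun P => by
    have h := torusProd_ne_zero P
    show (∏ i, P.1 i) * ((∏ i, ((torusInv s K P).1 i)) * c (torusInv s K (torusInv s K P))) = c P
    rw [show (torusInv s K) ((torusInv s K) P) = P from (torusInv s K).left_inv P]
    simp only [torusInv, Equiv.coe_fn_mk, Finset.prod_inv_distrib, ← mul_assoc,
      mul_inv_cancel₀ h, one_mul]
  right_inv c := funext fun P => by
    have h := torusProd_ne_zero P
    show (∏ i, P.1 i) * ((∏ i, ((torusInv s K P).1 i)) * c (torusInv s K (torusInv s K P))) = c P
    rw [show (torusInv s K) ((torusInv s K) P) = P from (torusInv s K).left_inv P]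
    simp only [torusInv, Equiv.coe_fn_mk, Finset.prod_inv_distrib, ← mul_assoc,
      mul_inv_cancel₀ h, one_mul]

lemma phiEquiv_apply {s : ℕ} {K : Type} [Field K] (c : Torus s K → K) (P : Torus s K) :
    phiEquiv s K c P = (∏ i, P.1 i) * c (torusInv s K P) := rfl

lemma evalTorus_apply {s : ℕ} {K : Type} [Field K] (f : MvPolynomial (Fin s) K)
    (P : Torus s K) : evalTorus s K f P = aeval P.1 f := rfl

lemma phi_eval {s : ℕ} {K : Type} [Field K] (e : Finset (Fin s)) :
    phiEquiv s K (evalTorus s K (∏ j ∈ e, X j)) = evalTorus s K (∏ j ∈ eᶜ, X j) := by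
  funext P
  rw [phiEquiv_apply, evalTorus_apply, evalTorus_apply, map_prod, map_prod]
  simp only [aeval_X]
  have he : (∏ j ∈ e, P.1 j) ≠ 0 := Finset.prod_ne_zero_iff.2 fun i _ => P.2 i
  have hsplit : (∏ j ∈ e, P.1 j) * ∏ j ∈ eᶜ, P.1 j = ∏ i, P.1 i :=
    Finset.prod_mul_prod_compl e _
  have : ∏ j ∈ e, ((torusInv s K P).1 j) = (∏ j ∈ e, P.1 j)⁻¹ := by
    simp [torusInv, Finset.prod_inv_distrib]
  rw [this, ← hsplit]
  field_simp

lemma map_phi_edgeCode {s : ℕ} {K : Type} [Field K] (E : Set (Finset (Fin s))) :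
    Submodule.map (phiEquiv s K : (Torus s K → K) →ₗ[K] (Torus s K → K))
      (edgeCode s K E) = edgeCode s K ((fun e => eᶜ) '' E) := by
  unfold edgeCode
  rw [Submodule.map_span, Submodule.map_span, Submodule.map_span]
  congr 1
  simp only [Set.image_image]
  exact Set.image_congr fun e _ => phi_eval (s := s) (K := K) e

lemma wt_phi {s : ℕ} {K : Type} [Field K] (c : Torus s K → K) :
    wt (phiEquiv s K c) = wt c := by
  unfold wt
  have hset : {P | phiEquiv s K c P ≠ 0} = (torusInv s K) ⁻¹' {P | c P ≠ 0} := by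
    ext P
    simp [phiEquiv_apply, mul_ne_zero_iff, torusProd_ne_zero P]
  rw [hset, ← Equiv.image_symm_eq_preimage]
  exact Set.ncard_image_of_injective _ (torusInv s K).symm.injective

/-- the edge code of a hypergraph `H` and the edge code of its
edge-removed hypergraph `H*` (whose edges are the complements of the edges of `H`)
have the same length, the same dimension and the same minimum distance. -/
theorem edgeCode_edgeRemoved_same_parameters
    (q s : ℕ) (K : Type) [Field K] [Fintype K] (hK : Fintype.card K = q)
    (E : Finset (Finset (Fin s))) (hE : E.Nonempty) :
    -- same length: both codes live in `K^T`, of cardinality `(q-1)^s`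
    Nat.card (Torus s K) = Nat.card (Torus s K) ∧
    -- same dimension
    Module.finrank K (edgeCode s K (E : Set (Finset (Fin s))))
      = Module.finrank K (edgeCode s K ((E.image fun e => eᶜ) : Set (Finset (Fin s)))) ∧
    -- same minimum distance
    minDist (edgeCode s K (E : Set (Finset (Fin s))))
      = minDist (edgeCode s K ((E.image fun e => eᶜ) : Set (Finset (Fin s)))) := by
  have hcoe : ((E.image fun e => eᶜ) : Set (Finset (Fin s)))
      = (fun e => eᶜ) '' (E : Set (Finset (Fin s))) := Finset.coe_image
  have hmap := map_phi_edgeCode (s := s) (K := K) (E : Set (Finset (Fin s)))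
  refine ⟨rfl, ?_, ?_⟩
  · rw [hcoe, ← hmap]
    exact (LinearEquiv.finrank_map_eq (phiEquiv s K) _).symm
  · rw [hcoe, ← hmap]
    unfold minDist
    congr 1
    ext w
    constructor
    · rintro ⟨c, hc, hne, hw⟩
      exact ⟨phiEquiv s K c, Submodule.mem_map_of_mem hc,
        by simpa using (phiEquiv s K).map_ne_zero_iff.2 hne, by rw [wt_phi]; exact hw⟩
    · rintro ⟨c', hc', hne, hw⟩
      obtain ⟨c, hc, rfl⟩ := hc'
      refine ⟨c, hc, fun h => hne (by simp [h]), ?_⟩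
      rw [← hw]; exact (wt_phi c).symm
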